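/- Let A = M_n(ℂ), n ≥ 3, and let Δ : A → A be a map such that for every pair x, y ∈ A there exists d ∈ A with Δ(x) = dx − xd and Δ(y) = dy − yd. Then there exists a ∈ A such that Δ(x) = ax − xa for all x ∈ A; in particular Δ is a derivation. -/

import Mathlib

open Matrix

namespace TwoLocalAux

variable {n : ℕ}

lemma trace_mul_single (m : Matrix (Fin n) (Fin n) ℂ) (i j : Fin n) :
    (m * Matrix.single j i 1).trace = m i j := by
  rw [Matrix.trace]
  rw [Finset.sum_eq_single i]
  · simp [Matrix.diag]
  · intro k _ hk
    simp [Matrix.diag, Matrix.mul_single_apply_of_ne _ _ _ _ _ hk]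
  · simp

lemma eq_zero_of_trace_mul (m : Matrix (Fin n) (Fin n) ℂ)
    (h : ∀ z : Matrix (Fin n) (Fin n) ℂ, (m * z).trace = 0) : m = 0 := by
  ext i j
  have := h (Matrix.single j i 1)
  rw [trace_mul_single] at this
  simpa using this

lemma diag_comm_single (f : Fin n → ℂ) (i j : Fin n) :
    Matrix.diagonal f * Matrix.single i j (1:ℂ) - Matrix.single i j 1 * Matrix.diagonal f
      = (f i - f j) • Matrix.single i j 1 := by
  ext a b
  simp only [Matrix.sub_apply, Matrix.diagonal_mul, Matrix.mul_diagonal, Matrix.smul_apply,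
    smul_eq_mul, Matrix.single, Matrix.of_apply]
  by_cases h1 : i = a <;> by_cases h2 : j = b <;> simp [h1, h2]

end TwoLocalAux

open TwoLocalAux in
theorem twoLocalDerivation_matrix_algebra_is_inner
    {n : ℕ} (hn : 3 ≤ n)
    (Δ : Matrix (Fin n) (Fin n) ℂ → Matrix (Fin n) (Fin n) ℂ)
    (h2loc : ∀ x y : Matrix (Fin n) (Fin n) ℂ, ∃ d : Matrix (Fin n) (Fin n) ℂ,
      Δ x = d * x - x * d ∧ Δ y = d * y - y * d) :
    ∃ a : Matrix (Fin n) (Fin n) ℂ,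
      ∀ x : Matrix (Fin n) (Fin n) ℂ, Δ x = a * x - x * a := by
  classical
  -- Step 1: skew-symmetry of the trace form
  have hskew : ∀ x y : Matrix (Fin n) (Fin n) ℂ, (Δ x * y).trace = -((x * Δ y).trace) := by
    intro x y
    obtain ⟨d, hx, hy⟩ := h2loc x y
    rw [hx, hy]
    simp only [Matrix.sub_mul, Matrix.mul_sub, Matrix.trace_sub, ← Matrix.mul_assoc]
    rw [Matrix.trace_mul_comm (x * y) d, ← Matrix.mul_assoc]
    ring
  -- Step 2: additivity and homogeneity
  have hadd : ∀ x y : Matrix (Fin n) (Fin n) ℂ, Δ (x + y) = Δ x + Δ y := by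
    intro x y
    have key : ∀ z : Matrix (Fin n) (Fin n) ℂ, ((Δ (x + y) - Δ x - Δ y) * z).trace = 0 := by
      intro z
      simp only [Matrix.sub_mul, Matrix.trace_sub, hskew, Matrix.add_mul, Matrix.trace_add]
      ring
    have h0 := eq_zero_of_trace_mul _ key
    rw [sub_sub, sub_eq_zero] at h0
    exact h0
  have hsmul : ∀ (r : ℂ) (x : Matrix (Fin n) (Fin n) ℂ), Δ (r • x) = r • Δ x := by
    intro r x
    have key : ∀ z : Matrix (Fin n) (Fin n) ℂ, ((Δ (r • x) - r • Δ x) * z).trace = 0 := by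
      intro z
      simp only [Matrix.sub_mul, Matrix.trace_sub, hskew, Matrix.smul_mul, Matrix.trace_smul,
        smul_neg]
      ring_nf
    have h0 := eq_zero_of_trace_mul _ key
    rwa [sub_eq_zero] at h0
  -- The separating pair
  have hn0 : 0 < n := by omega
  set z0 : Fin n := ⟨0, hn0⟩ with hz0
  set p : Matrix (Fin n) (Fin n) ℂ := Matrix.diagonal (fun i : Fin n => ((i : ℕ) : ℂ)) with hp
  set q : Matrix (Fin n) (Fin n) ℂ := ∑ j : Fin n, Matrix.single z0 j 1 with hq
  obtain ⟨a, hap, haq⟩ := h2loc p q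
  set D : Matrix (Fin n) (Fin n) ℂ → Matrix (Fin n) (Fin n) ℂ := fun x => Δ x - (a * x - x * a) with hD
  refine ⟨a, fun x => ?_⟩
  suffices hgoal : D x = 0 by
    have : Δ x - (a * x - x * a) = 0 := hgoal
    rwa [sub_eq_zero] at this
  -- properties of D
  have hD2loc : ∀ x y : Matrix (Fin n) (Fin n) ℂ, ∃ d : Matrix (Fin n) (Fin n) ℂ, D x = d * x - x * d ∧ D y = d * y - y * d := by
    intro x y
    obtain ⟨d, hx, hy⟩ := h2loc x y
    refine ⟨d - a, ?_, ?_⟩ <;> simp only [hD, hx, hy] <;> noncomm_ring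
  have hDp : D p = 0 := by simp [hD, hap]
  have hDq : D q = 0 := by simp [hD, haq]
  have hDadd : ∀ x y : Matrix (Fin n) (Fin n) ℂ, D (x + y) = D x + D y := by
    intro x y
    simp only [hD, hadd]
    noncomm_ring
  have hDsmul : ∀ (r : ℂ) (x : Matrix (Fin n) (Fin n) ℂ), D (r • x) = r • D x := by
    intro r x
    simp only [hD, hsmul, smul_sub, Matrix.mul_smul, Matrix.smul_mul]
  set DD : Matrix (Fin n) (Fin n) ℂ →+ Matrix (Fin n) (Fin n) ℂ := AddMonoidHom.mk' D hDadd with hDD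
  -- commuting with p means diagonal
  have hdiag : ∀ d : Matrix (Fin n) (Fin n) ℂ, d * p = p * d → d = Matrix.diagonal (fun k => d k k) := by
    intro d hc
    ext i j
    by_cases hij : i = j
    · subst hij; simp
    · rw [Matrix.diagonal_apply_ne _ hij]
      have h2 : (d * p) i j = (p * d) i j := by rw [hc]
      rw [hp, Matrix.mul_diagonal, Matrix.diagonal_mul] at h2
      have hne : ((i : ℕ) : ℂ) ≠ ((j : ℕ) : ℂ) := by
        intro h
        exact hij (Fin.val_injective (by exact_mod_cast h))
      have h3 : d i j * (((j : ℕ) : ℂ) - ((i : ℕ) : ℂ)) = 0 := by linear_combination h2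
      rcases mul_eq_zero.mp h3 with h | h
      · simpa using h
      · exact absurd (by linear_combination h) (Ne.symm hne)
  -- D on matrix units is a scalar multiple
  have hunit : ∀ i j : Fin n, D (Matrix.single i j 1) =
      (D (Matrix.single i j 1) i j) • Matrix.single i j 1 := by
    intro i j
    obtain ⟨d, hx, hpp⟩ := hD2loc (Matrix.single i j 1) p
    rw [hDp] at hpp
    have hcomm : d * p = p * d := by
      have := hpp.symm
      rwa [sub_eq_zero] at this
    have hd := hdiag d hcomm
    rw [hx, hd, diag_comm_single]
    simp
  set c : Fin n → Fin n → ℂ := fun i j => D (Matrix.single i j 1) i j with hc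
  have hdiag0 : ∀ i : Fin n, D (Matrix.single i i 1) = 0 := by
    intro i
    obtain ⟨d, hx, hpp⟩ := hD2loc (Matrix.single i i 1) p
    rw [hDp] at hpp
    have hcomm : d * p = p * d := by
      have := hpp.symm
      rwa [sub_eq_zero] at this
    rw [hx, hdiag d hcomm, diag_comm_single]
    simp
  -- cocycle identity
  have cocycle : ∀ i j k : Fin n, i ≠ j → j ≠ k → i ≠ k → c i k = c i j + c j k := by
    intro i j k hij hjk hik
    obtain ⟨d, h1, h2⟩ := hD2loc (Matrix.single i k 1) (Matrix.single i j 1 + Matrix.single j k 1)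
    have e1 : (c i k • Matrix.single i k (1:ℂ) : Matrix (Fin n) (Fin n) ℂ) i k
        = (d * Matrix.single i k 1 - Matrix.single i k 1 * d : Matrix (Fin n) (Fin n) ℂ) i k := by
      rw [← hunit i k, h1]
    simp only [Matrix.smul_apply, Matrix.sub_apply, Matrix.single_apply_same, smul_eq_mul,
      mul_one, Matrix.mul_single_apply_same, Matrix.single_mul_apply_same,
      one_mul] at e1
    have h2' : D (Matrix.single i j 1 + Matrix.single j k 1)
        = c i j • Matrix.single i j 1 + c j k • Matrix.single j k 1 := by
      rw [hDadd, ← hunit i j, ← hunit j k]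
    rw [h2'] at h2
    have e2 : (c i j • Matrix.single i j (1:ℂ) + c j k • Matrix.single j k 1 : Matrix (Fin n) (Fin n) ℂ) i j
        = (d * (Matrix.single i j 1 + Matrix.single j k 1)
            - (Matrix.single i j 1 + Matrix.single j k 1) * d : Matrix (Fin n) (Fin n) ℂ) i j := by rw [h2]
    have e3 : (c i j • Matrix.single i j (1:ℂ) + c j k • Matrix.single j k 1 : Matrix (Fin n) (Fin n) ℂ) j k
        = (d * (Matrix.single i j 1 + Matrix.single j k 1)
            - (Matrix.single i j 1 + Matrix.single j k 1) * d : Matrix (Fin n) (Fin n) ℂ) j k := by rw [h2]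
    simp only [Matrix.add_apply, Matrix.smul_apply, Matrix.sub_apply, Matrix.mul_add,
      Matrix.add_mul, Matrix.single_apply_same, smul_eq_mul, mul_one, one_mul,
      Matrix.mul_single_apply_same, Matrix.single_mul_apply_same] at e2 e3
    rw [Matrix.single_apply_of_ne _ _ _ _ _ (by tauto),
      Matrix.mul_single_apply_of_ne _ _ _ _ _ hjk,
      Matrix.single_mul_apply_of_ne _ _ _ _ _ hij] at e2
    rw [Matrix.single_apply_of_ne _ _ _ _ _ (by tauto),
      Matrix.mul_single_apply_of_ne _ _ _ _ _ (Ne.symm hjk),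
      Matrix.single_mul_apply_of_ne _ _ _ _ _ (Ne.symm hij)] at e3
    -- e1 : c i k = d i i - d k k, e2 : c i j = d i i - d j j, e3 : c j k = d j j - d k k
    linear_combination e1 - e2 - e3
  -- third element
  have third : ∀ i j : Fin n, ∃ k : Fin n, k ≠ i ∧ k ≠ j := by
    intro i j
    have h2 : ¬ (Finset.univ : Finset (Fin n)) ⊆ {i, j} := by
      intro hsub
      have hcard := Finset.card_le_card hsub
      have h1 : ({i, j} : Finset (Fin n)).card ≤ 2 :=
        (Finset.card_insert_le _ _).trans (by simp)
      rw [Finset.card_univ, Fintype.card_fin] at hcard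
      omega
    obtain ⟨k, -, hk⟩ := Finset.not_subset.mp h2
    simp only [Finset.mem_insert, Finset.mem_singleton, not_or] at hk
    exact ⟨k, hk.1, hk.2⟩
  -- c z0 j = 0
  have hc0 : ∀ j : Fin n, j ≠ z0 → c z0 j = 0 := by
    intro j hj
    have hDqsum : (0 : Matrix (Fin n) (Fin n) ℂ) = ∑ j : Fin n, (c z0 j) • Matrix.single z0 j 1 := by
      rw [← hDq, hq]
      rw [show D (∑ j : Fin n, Matrix.single z0 j (1:ℂ))
          = DD (∑ j : Fin n, Matrix.single z0 j (1:ℂ)) from rfl, map_sum]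
      exact Finset.sum_congr rfl fun j _ => hunit z0 j
    have := congrArg (fun m : Matrix (Fin n) (Fin n) ℂ => m z0 j) hDqsum
    simp only [Matrix.zero_apply, Matrix.sum_apply, Matrix.smul_apply, smul_eq_mul] at this
    rw [Finset.sum_eq_single j] at this
    · simpa using this.symm
    · intro b _ hb
      rw [Matrix.single_apply_of_ne _ _ _ _ _ (by tauto), mul_zero]
    · simp
  -- c j z0 = 0
  have hcj0 : ∀ j : Fin n, j ≠ z0 → c j z0 = 0 := by
    intro j hj
    obtain ⟨i, hij, hi0⟩ := third j z0
    have e1 : c i z0 = c i j + c j z0 := cocycle i j z0 hij hj hi0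
    have e2 : c i j = c i z0 + c z0 j := cocycle i z0 j hi0 (Ne.symm hj) hij
    have e3 : c z0 j = 0 := hc0 j hj
    linear_combination - e1 - e2 - e3
  -- all c vanish
  have hcall : ∀ i j : Fin n, D (Matrix.single i j 1) = 0 := by
    intro i j
    by_cases hij : i = j
    · subst hij; exact hdiag0 i
    · rw [hunit i j]
      suffices hcz : c i j = 0 by rw [show D (Matrix.single i j 1) i j = c i j from rfl, hcz, zero_smul]
      by_cases hi0 : i = z0
      · subst hi0; exact hc0 j (Ne.symm hij)
      · by_cases hj0 : j = z0
        · subst hj0; exact hcj0 i hi0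
        · have := cocycle i z0 j hi0 (fun h => hj0 h.symm) hij
          rw [hcj0 i hi0, hc0 j hj0] at this
          simpa using this
  -- conclude
  have hx := Matrix.matrix_eq_sum_single x
  calc D x = DD x := rfl
    _ = 0 := by
      rw [hx, map_sum]
      refine Finset.sum_eq_zero fun i _ => ?_
      rw [map_sum]
      refine Finset.sum_eq_zero fun j _ => ?_
      have : Matrix.single i j (x i j) = (x i j) • Matrix.single i j (1:ℂ) := by
        rw [smul_single, smul_eq_mul, mul_one]
      rw [show (DD (Matrix.single i j (x i j)) : Matrix (Fin n) (Fin n) ℂ) = D (Matrix.single i j (x i j)) from rfl,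
        this, hDsmul, hcall, smul_zero]
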